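/- Let X ⊂ S² be the 12-point vertex set of the cuboctahedron (the quasi-regular polyhedron of vertex type [3,4,3,4]) inscribed in the unit sphere, consisting of all vectors with one coordinate 0 and the other two coordinates ±1/√2; its maximum pairwise inner product is α = 1/2. Then for every unit vector y ∈ S² with y ∉ X, there exists x ∈ X with ⟨x,y⟩ > 1/2; i.e., adjoining any new point of S² to X strictly increases the maximum pairwise inner product. -/

import Mathlib

set_option linter.unusedTactic false

open scoped RealInnerProductSpace

/-- The golden ratio `(1 + √5)/2`. -/
noncomputable def gr : ℝ := (1 + Real.sqrt 5) / 2

/-- Vertex set of the cuboctahedron (the quasi-regular polyhedron of vertex type `[3,4,3,4]`)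
inscribed in the unit sphere: all vectors with one coordinate `0` and the other two `±1/√2`. -/
noncomputable def cuboctahedron : Set (EuclideanSpace ℝ (Fin 3)) :=
  {v | ∃ i, v i = 0 ∧ ∀ j, j ≠ i → (v j = (Real.sqrt 2)⁻¹ ∨ v j = -(Real.sqrt 2)⁻¹)}

private lemma inner3 (x y : EuclideanSpace ℝ (Fin 3)) :
    ⟪x, y⟫ = x 0 * y 0 + x 1 * y 1 + x 2 * y 2 := by
  simp [PiLp.inner_apply, Fin.sum_univ_three, RCLike.inner_apply, mul_comm]

private lemma hcmul : (Real.sqrt 2)⁻¹ * (Real.sqrt 2)⁻¹ = 1 / 2 := by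
  rw [← mul_inv, Real.mul_self_sqrt (by norm_num : (0:ℝ) ≤ 2)]; norm_num

private lemma hcpos : 0 < (Real.sqrt 2)⁻¹ := by positivity

/-- The cuboctahedron (vertex type `[3,4,3,4]`) inscribed in the unit sphere has maximum pairwise inner product `α = 1 / 2`,
and adjoining any new unit vector strictly increases the maximum pairwise inner product:
every unit vector `y ∉ X` has `⟪x, y⟫ > α` for some vertex `x`. -/
theorem stmt_17 :
    IsGreatest {r : ℝ | ∃ x ∈ cuboctahedron, ∃ y ∈ cuboctahedron, x ≠ y ∧ ⟪x, y⟫ = r} (1 / 2) ∧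
      ∀ y : EuclideanSpace ℝ (Fin 3), ‖y‖ = 1 → y ∉ cuboctahedron →
        ∃ x ∈ cuboctahedron, ⟪x, y⟫ > (1 / 2) := by
  have hc := hcmul
  have hcp := hcpos
  constructor
  · constructor
    · -- 1/2 is attained
      refine ⟨(WithLp.equiv 2 (Fin 3 → ℝ)).symm ![0, (Real.sqrt 2)⁻¹, (Real.sqrt 2)⁻¹], ?_,
              (WithLp.equiv 2 (Fin 3 → ℝ)).symm ![(Real.sqrt 2)⁻¹, 0, (Real.sqrt 2)⁻¹], ?_, ?_, ?_⟩
      · exact ⟨0, by simp, fun j hj => by fin_cases j <;> simp_all⟩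
      · exact ⟨1, by simp, fun j hj => by fin_cases j <;> simp_all⟩
      · intro h
        have h0 : (0:ℝ) = (Real.sqrt 2)⁻¹ := congrArg (fun v : EuclideanSpace ℝ (Fin 3) => v 0) h
        exact absurd h0.symm (ne_of_gt hcp)
      · rw [inner3]
        simp [WithLp.equiv_symm_apply, PiLp.toLp_apply]
        linarith [hc]
    · -- upper bound
      rintro r ⟨x, ⟨i, hxi, hx⟩, y, ⟨j, hyj, hy⟩, hxy, rfl⟩
      rw [inner3]
      fin_cases i <;> fin_cases j
      · -- i = 0, j = 0
        have hx0 : x 0 = 0 := hxi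
        have hy0 : y 0 = 0 := hyj
        rcases hx 1 (by decide) with h1|h1 <;> rcases hx 2 (by decide) with h2|h2 <;>
        rcases hy 1 (by decide) with k1|k1 <;> rcases hy 2 (by decide) with k2|k2 <;>
        rw [hx0, hy0, h1, h2, k1, k2] <;>
        first
          | (simp only [zero_mul, mul_zero, neg_mul, mul_neg, neg_neg, zero_add, add_zero, hc]; norm_num; done)
          | (exact absurd (PiLp.ext fun k => by
              fin_cases k
              · exact hx0.trans hy0.symm
              · exact h1.trans k1.symm
              · exact h2.trans k2.symm) hxy)
      · -- i = 0, j = 1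
        have hx0 : x 0 = 0 := hxi
        have hy1 : y 1 = 0 := hyj
        rcases hx 1 (by decide) with h1|h1 <;> rcases hx 2 (by decide) with h2|h2 <;>
        rcases hy 0 (by decide) with k0|k0 <;> rcases hy 2 (by decide) with k2|k2 <;>
        rw [hx0, hy1, h1, h2, k0, k2] <;> (simp only [zero_mul, mul_zero, neg_mul, mul_neg, neg_neg, zero_add, add_zero, hc]; norm_num; done)
      · -- i = 0, j = 2
        have hx0 : x 0 = 0 := hxi
        have hy2 : y 2 = 0 := hyj
        rcases hx 1 (by decide) with h1|h1 <;> rcases hx 2 (by decide) with h2|h2 <;>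
        rcases hy 0 (by decide) with k0|k0 <;> rcases hy 1 (by decide) with k1|k1 <;>
        rw [hx0, hy2, h1, h2, k0, k1] <;> (simp only [zero_mul, mul_zero, neg_mul, mul_neg, neg_neg, zero_add, add_zero, hc]; norm_num; done)
      · -- i = 1, j = 0
        have hx1 : x 1 = 0 := hxi
        have hy0 : y 0 = 0 := hyj
        rcases hx 0 (by decide) with h0|h0 <;> rcases hx 2 (by decide) with h2|h2 <;>
        rcases hy 1 (by decide) with k1|k1 <;> rcases hy 2 (by decide) with k2|k2 <;>
        rw [hx1, hy0, h0, h2, k1, k2] <;> (simp only [zero_mul, mul_zero, neg_mul, mul_neg, neg_neg, zero_add, add_zero, hc]; norm_num; done)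
      · -- i = 1, j = 1
        have hx1 : x 1 = 0 := hxi
        have hy1 : y 1 = 0 := hyj
        rcases hx 0 (by decide) with h0|h0 <;> rcases hx 2 (by decide) with h2|h2 <;>
        rcases hy 0 (by decide) with k0|k0 <;> rcases hy 2 (by decide) with k2|k2 <;>
        rw [hx1, hy1, h0, h2, k0, k2] <;>
        first
          | (simp only [zero_mul, mul_zero, neg_mul, mul_neg, neg_neg, zero_add, add_zero, hc]; norm_num; done)
          | (exact absurd (PiLp.ext fun k => by
              fin_cases k
              · exact h0.trans k0.symm
              · exact hx1.trans hy1.symm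
              · exact h2.trans k2.symm) hxy)
      · -- i = 1, j = 2
        have hx1 : x 1 = 0 := hxi
        have hy2 : y 2 = 0 := hyj
        rcases hx 0 (by decide) with h0|h0 <;> rcases hx 2 (by decide) with h2|h2 <;>
        rcases hy 0 (by decide) with k0|k0 <;> rcases hy 1 (by decide) with k1|k1 <;>
        rw [hx1, hy2, h0, h2, k0, k1] <;> (simp only [zero_mul, mul_zero, neg_mul, mul_neg, neg_neg, zero_add, add_zero, hc]; norm_num; done)
      · -- i = 2, j = 0
        have hx2 : x 2 = 0 := hxi
        have hy0 : y 0 = 0 := hyj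
        rcases hx 0 (by decide) with h0|h0 <;> rcases hx 1 (by decide) with h1|h1 <;>
        rcases hy 1 (by decide) with k1|k1 <;> rcases hy 2 (by decide) with k2|k2 <;>
        rw [hx2, hy0, h0, h1, k1, k2] <;> (simp only [zero_mul, mul_zero, neg_mul, mul_neg, neg_neg, zero_add, add_zero, hc]; norm_num; done)
      · -- i = 2, j = 1
        have hx2 : x 2 = 0 := hxi
        have hy1 : y 1 = 0 := hyj
        rcases hx 0 (by decide) with h0|h0 <;> rcases hx 1 (by decide) with h1|h1 <;>
        rcases hy 0 (by decide) with k0|k0 <;> rcases hy 2 (by decide) with k2|k2 <;>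
        rw [hx2, hy1, h0, h1, k0, k2] <;> (simp only [zero_mul, mul_zero, neg_mul, mul_neg, neg_neg, zero_add, add_zero, hc]; norm_num; done)
      · -- i = 2, j = 2
        have hx2 : x 2 = 0 := hxi
        have hy2 : y 2 = 0 := hyj
        rcases hx 0 (by decide) with h0|h0 <;> rcases hx 1 (by decide) with h1|h1 <;>
        rcases hy 0 (by decide) with k0|k0 <;> rcases hy 1 (by decide) with k1|k1 <;>
        rw [hx2, hy2, h0, h1, k0, k1] <;>
        first
          | (simp only [zero_mul, mul_zero, neg_mul, mul_neg, neg_neg, zero_add, add_zero, hc]; norm_num; done)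
          | (exact absurd (PiLp.ext fun k => by
              fin_cases k
              · exact h0.trans k0.symm
              · exact h1.trans k1.symm
              · exact hx2.trans hy2.symm) hxy)
  · -- covering part
    intro y hy _hyX
    by_contra hcon
    push_neg at hcon
    have hnorm : y 0 ^2 + y 1 ^2 + y 2 ^2 = 1 := by
      have h2 := EuclideanSpace.norm_eq y
      rw [hy, Fin.sum_univ_three] at h2
      simp only [Real.norm_eq_abs, sq_abs] at h2
      have h3 : Real.sqrt (y 0 ^2 + y 1 ^2 + y 2 ^2) = 1 := h2.symm
      nlinarith [Real.sq_sqrt (show (0:ℝ) ≤ y 0 ^2 + y 1 ^2 + y 2 ^2 by positivity)]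
    set c := (Real.sqrt 2)⁻¹ with hcdef
    have key : ∀ t : ℝ, (if 0 ≤ t then c else -c) * t = c * |t| := by
      intro t
      by_cases h : 0 ≤ t
      · rw [if_pos h, abs_of_nonneg h]
      · rw [if_neg h, abs_of_neg (lt_of_not_ge h)]; ring
    have mem : ∀ i : Fin 3, (WithLp.equiv 2 (Fin 3 → ℝ)).symm
        (fun k => if k = i then 0 else (if 0 ≤ y k then c else -c)) ∈ cuboctahedron := by
      intro i
      refine ⟨i, by simp, fun j hj => ?_⟩
      simp only [WithLp.equiv_symm_apply, PiLp.toLp_apply, if_neg hj]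
      by_cases h : 0 ≤ y j
      · left; rw [if_pos h]
      · right; rw [if_neg h]
    have h0 := hcon _ (mem 0)
    have h1 := hcon _ (mem 1)
    have h2 := hcon _ (mem 2)
    rw [inner3] at h0 h1 h2
    simp only [WithLp.equiv_symm_apply, PiLp.toLp_apply, if_pos rfl, if_true, eq_self_iff_true,
      if_neg (by decide : (0:Fin 3) ≠ 1),
      if_neg (by decide : (0:Fin 3) ≠ 2), if_neg (by decide : (1:Fin 3) ≠ 0),
      if_neg (by decide : (1:Fin 3) ≠ 2), if_neg (by decide : (2:Fin 3) ≠ 0),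
      if_neg (by decide : (2:Fin 3) ≠ 1), key, zero_mul] at h0 h1 h2
    have a0 := abs_nonneg (y 0)
    have a1 := abs_nonneg (y 1)
    have a2 := abs_nonneg (y 2)
    have s0 := sq_abs (y 0)
    have s1 := sq_abs (y 1)
    have s2 := sq_abs (y 2)
    nlinarith [hc, hcp, mul_nonneg a0 a1, mul_nonneg a1 a2, mul_nonneg a0 a2,
      mul_le_mul_of_nonneg_left h0 hcp.le, mul_le_mul_of_nonneg_left h1 hcp.le,
      mul_le_mul_of_nonneg_left h2 hcp.le]
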